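/- Let B > 0, γ > 0 and T_b ∈ [0,γ]. Let φ : ℝ → ℝ be continuous, strictly increasing and bounded, with φ(0) ≤ 0. Let g ∈ C([0,B]) satisfy 0 ≤ g(x) ≤ φ(γ) for all x ∈ [0,B]. Then there exists a function T ∈ C²([0,B]) such that −T''(x) + φ(T(x)) = g(x) for all x ∈ [0,B], T(0) = T_b, T'(B) = 0, and 0 ≤ T(x) ≤ γ for all x ∈ [0,B]. -/

import Mathlib

open Set MeasureTheory Filter
open scoped NNReal

namespace BVP9

lemma P_eq {h : ℝ → ℝ} (hc : Continuous h) (x : ℝ) :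
    (∫ t in (0:ℝ)..x, (x - t) * h t) =
      x * (∫ t in (0:ℝ)..x, h t) - ∫ t in (0:ℝ)..x, t * h t := by
  rw [← intervalIntegral.integral_const_mul, ← intervalIntegral.integral_sub
    (f := fun t => x * h t) (g := fun t => t * h t) ((continuous_const.mul hc : Continuous fun t => x * h t).intervalIntegrable _ _) ((continuous_id'.mul hc).intervalIntegrable _ _)]
  congr 1; ext t; ring

lemma hasDerivAt_P {h : ℝ → ℝ} (hc : Continuous h) (x : ℝ) :
    HasDerivAt (fun y => ∫ t in (0:ℝ)..y, (y - t) * h t) (∫ t in (0:ℝ)..x, h t) x := by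
  have heq : (fun y => ∫ t in (0:ℝ)..y, (y - t) * h t)
      = fun y => y * (∫ t in (0:ℝ)..y, h t) - ∫ t in (0:ℝ)..y, t * h t := funext (P_eq hc)
  have hI : HasDerivAt (fun y => ∫ t in (0:ℝ)..y, h t) (h x) x :=
    intervalIntegral.integral_hasDerivAt_right (hc.intervalIntegrable _ _)
      (hc.stronglyMeasurable.stronglyMeasurableAtFilter) hc.continuousAt
  have hJ : HasDerivAt (fun y => ∫ t in (0:ℝ)..y, t * h t) (x * h x) x :=
    intervalIntegral.integral_hasDerivAt_right ((continuous_id'.mul hc).intervalIntegrable _ _)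
      ((continuous_id'.mul hc).stronglyMeasurable.stronglyMeasurableAtFilter)
      (continuous_id'.mul hc).continuousAt
  have h2 : HasDerivAt (fun y => y * (∫ t in (0:ℝ)..y, h t) - ∫ t in (0:ℝ)..y, t * h t)
      (1 * (∫ t in (0:ℝ)..x, h t) + x * h x - x * h x) x :=
    ((hasDerivAt_id' (x := x)).mul hI).sub hJ
  rw [heq]
  convert h2 using 1
  ring

lemma continuous_P {h : ℝ → ℝ} (hc : Continuous h) :
    Continuous fun x => ∫ t in (0:ℝ)..x, (x - t) * h t :=
  continuous_iff_continuousAt.2 fun x => (hasDerivAt_P hc x).continuousAt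

lemma abs_I_le {h : ℝ → ℝ} {K : ℝ} (hK : ∀ t, |h t| ≤ K) {x : ℝ} (hx : 0 ≤ x) :
    |∫ t in (0:ℝ)..x, h t| ≤ K * x := by
  have := intervalIntegral.norm_integral_le_of_norm_le_const
    (a := 0) (b := x) (C := K) (f := h) (fun t _ => hK t)
  rw [Real.norm_eq_abs] at this
  calc |∫ t in (0:ℝ)..x, h t| ≤ K * |x - 0| := this
  _ = K * x := by rw [sub_zero, abs_of_nonneg hx]

lemma abs_P_le {h : ℝ → ℝ} {K : ℝ} (hK : ∀ t, |h t| ≤ K) {x B : ℝ} (hx : 0 ≤ x) (hxB : x ≤ B) :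
    |∫ t in (0:ℝ)..x, (x - t) * h t| ≤ K * B ^ 2 := by
  have hK0 : 0 ≤ K := le_trans (abs_nonneg _) (hK 0)
  have := intervalIntegral.norm_integral_le_of_norm_le_const
    (a := 0) (b := x) (C := K * B) (f := fun t => (x - t) * h t) ?_
  · rw [Real.norm_eq_abs, sub_zero, abs_of_nonneg hx] at this
    calc |∫ t in (0:ℝ)..x, (x - t) * h t| ≤ K * B * x := this
    _ ≤ K * B * B := by nlinarith [mul_nonneg hK0 (le_trans hx hxB)]
    _ = K * B ^ 2 := by ring
  · intro t ht
    rw [uIoc_of_le hx] at ht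
    rw [Real.norm_eq_abs, abs_mul]
    have h1 : |x - t| ≤ B := by rw [abs_of_nonneg (by linarith [ht.1, ht.2])]; linarith [ht.1]
    calc |x - t| * |h t| ≤ B * K := mul_le_mul h1 (hK t) (abs_nonneg _) (by linarith)
    _ = K * B := mul_comm _ _


variable {B : ℝ}

noncomputable def extI (hB : 0 < B) (u : C(Icc (0:ℝ) B, ℝ)) : ℝ → ℝ :=
  fun t => u (projIcc 0 B hB.le t)

lemma continuous_extI (hB : 0 < B) (u : C(Icc (0:ℝ) B, ℝ)) : Continuous (extI hB u) :=
  u.continuous.comp continuous_projIcc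

lemma extI_eq (hB : 0 < B) (u : C(Icc (0:ℝ) B, ℝ)) {t : ℝ} (ht : t ∈ Icc (0:ℝ) B) :
    extI hB u t = u ⟨t, ht⟩ := by
  simp [extI, projIcc, ht.1, ht.2, max_eq_right, min_eq_right]

noncomputable def Phi (hB : 0 < B) (Tb s : ℝ) {F gh : ℝ → ℝ}
    (hF : Continuous F) (hgh : Continuous gh) (u : C(Icc (0:ℝ) B, ℝ)) : C(Icc (0:ℝ) B, ℝ) :=
  ⟨fun x => Tb + s * (x:ℝ) + ∫ t in (0:ℝ)..(x:ℝ), ((x:ℝ) - t) * (F (extI hB u t) - gh t),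
    ((continuous_const.add (continuous_const.mul continuous_subtype_val)).add
      ((continuous_P ((hF.comp (continuous_extI hB u)).sub hgh)).comp continuous_subtype_val))⟩

lemma Phi_apply (hB : 0 < B) (Tb s : ℝ) {F gh : ℝ → ℝ}
    (hF : Continuous F) (hgh : Continuous gh) (u : C(Icc (0:ℝ) B, ℝ)) (x : Icc (0:ℝ) B) :
    Phi hB Tb s hF hgh u x
      = Tb + s * (x:ℝ) + ∫ t in (0:ℝ)..(x:ℝ), ((x:ℝ) - t) * (F (extI hB u t) - gh t) := rfl

lemma Phi_diff (hB : 0 < B) (Tb s : ℝ) {F gh : ℝ → ℝ}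
    (hF : Continuous F) (hgh : Continuous gh) (u v : C(Icc (0:ℝ) B, ℝ)) (x : Icc (0:ℝ) B) :
    Phi hB Tb s hF hgh u x - Phi hB Tb s hF hgh v x
      = ∫ t in (0:ℝ)..(x:ℝ), ((x:ℝ) - t) * (F (extI hB u t) - F (extI hB v t)) := by
  rw [Phi_apply, Phi_apply]
  have hcu : Continuous fun t => ((x:ℝ) - t) * (F (extI hB u t) - gh t) :=
    (continuous_const.sub continuous_id').mul ((hF.comp (continuous_extI hB u)).sub hgh)
  have hcv : Continuous fun t => ((x:ℝ) - t) * (F (extI hB v t) - gh t) :=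
    (continuous_const.sub continuous_id').mul ((hF.comp (continuous_extI hB v)).sub hgh)
  rw [show (Tb + s * (x:ℝ) + ∫ t in (0:ℝ)..(x:ℝ), ((x:ℝ) - t) * (F (extI hB u t) - gh t))
      - (Tb + s * (x:ℝ) + ∫ t in (0:ℝ)..(x:ℝ), ((x:ℝ) - t) * (F (extI hB v t) - gh t))
      = (∫ t in (0:ℝ)..(x:ℝ), ((x:ℝ) - t) * (F (extI hB u t) - gh t))
        - ∫ t in (0:ℝ)..(x:ℝ), ((x:ℝ) - t) * (F (extI hB v t) - gh t) by ring,
    ← intervalIntegral.integral_sub (hcu.intervalIntegrable _ _) (hcv.intervalIntegrable _ _)]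
  congr 1; ext t; ring

lemma integral_weight_pow {x : ℝ} (hx : 0 ≤ x) (n : ℕ) :
    ∫ t in (0:ℝ)..x, (x - t) * t ^ n ≤ x ^ (n + 2) / (2 * (n + 1)) := by
  have h1 : (∫ t in (0:ℝ)..x, (x - t) * t ^ n)
      = x * (x ^ (n+1) / (n+1)) - x ^ (n+2) / (n+2) := by
    rw [P_eq (continuous_pow n), integral_pow,
      show (fun t : ℝ => t * t ^ n) = fun t : ℝ => t ^ (n+1) from funext fun t => by ring,
      integral_pow, show n+1+1 = n+2 from by omega]
    push_cast
    ring_nf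
  rw [h1]
  have hn1 : (0:ℝ) < (n:ℝ) + 1 := by positivity
  have hn2 : (0:ℝ) < (n:ℝ) + 2 := by positivity
  have hxp : (0:ℝ) ≤ x ^ (n + 2) := by positivity
  have h2 : x * (x ^ (n+1) / ((n:ℝ)+1)) - x ^ (n+2) / ((n:ℝ)+2)
      = x ^ (n+2) / (((n:ℝ)+1) * ((n:ℝ)+2)) := by
    rw [mul_div_assoc', show x * x ^ (n+1) = x ^ (n+2) from by ring,
      div_sub_div _ _ hn1.ne' hn2.ne', div_eq_div_iff (by positivity) (by positivity)]
    ring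
  rw [h2]
  apply div_le_div_of_nonneg_left hxp (by positivity)
  nlinarith

lemma iter_bound (hB : 0 < B) (Tb s : ℝ) {F gh : ℝ → ℝ}
    (hF : Continuous F) (hgh : Continuous gh) (L : ℝ≥0) (hFL : LipschitzWith L F) :
    ∀ (j : ℕ) (u v : C(Icc (0:ℝ) B, ℝ)) (x : Icc (0:ℝ) B),
      |(Phi hB Tb s hF hgh)^[j] u x - (Phi hB Tb s hF hgh)^[j] v x|
        ≤ dist u v * ((L:ℝ) ^ j * (x:ℝ) ^ (2*j) / (2 ^ j * (j.factorial))) := by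
  intro j
  induction j with
  | zero =>
    intro u v x
    simpa [Real.dist_eq] using ContinuousMap.dist_apply_le_dist (f := u) (g := v) x
  | succ j IH =>
    intro u v x
    rw [Function.iterate_succ_apply', Function.iterate_succ_apply']
    set w₁ := (Phi hB Tb s hF hgh)^[j] u with hw₁
    set w₂ := (Phi hB Tb s hF hgh)^[j] v with hw₂
    have hx0 : (0:ℝ) ≤ (x:ℝ) := x.2.1
    have hxB : (x:ℝ) ≤ B := x.2.2
    have hd : (0:ℝ) ≤ dist u v := dist_nonneg
    rw [Phi_diff hB Tb s hF hgh w₁ w₂ x]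
    set c : ℝ := dist u v * ((L:ℝ) ^ j / (2 ^ j * (j.factorial))) with hc
    have hc0 : 0 ≤ c := by positivity
    have habs : |∫ t in (0:ℝ)..(x:ℝ), ((x:ℝ) - t) * (F (extI hB w₁ t) - F (extI hB w₂ t))|
        ≤ ∫ t in (0:ℝ)..(x:ℝ), |((x:ℝ) - t) * (F (extI hB w₁ t) - F (extI hB w₂ t))| :=
      intervalIntegral.abs_integral_le_integral_abs hx0
    have hcont1 : Continuous fun t => |((x:ℝ) - t) * (F (extI hB w₁ t) - F (extI hB w₂ t))| :=
      ((continuous_const.sub continuous_id').mul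
        ((hF.comp (continuous_extI hB w₁)).sub (hF.comp (continuous_extI hB w₂)))).abs
    have hmono : (∫ t in (0:ℝ)..(x:ℝ), |((x:ℝ) - t) * (F (extI hB w₁ t) - F (extI hB w₂ t))|)
        ≤ ∫ t in (0:ℝ)..(x:ℝ), ((L:ℝ) * c) * (((x:ℝ) - t) * t ^ (2*j)) := by
      apply intervalIntegral.integral_mono_on hx0 (hcont1.intervalIntegrable _ _)
        ((continuous_const.mul ((continuous_const.sub continuous_id').mul
          (continuous_pow (2*j)))).intervalIntegrable _ _)
      intro t ht
      have ht0 : 0 ≤ t := ht.1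
      have htx : t ≤ (x:ℝ) := ht.2
      have htB : t ∈ Icc (0:ℝ) B := ⟨ht0, le_trans htx hxB⟩
      rw [abs_mul, abs_of_nonneg (by linarith : (0:ℝ) ≤ (x:ℝ) - t)]
      have hlip : |F (extI hB w₁ t) - F (extI hB w₂ t)| ≤ (L:ℝ) * |w₁ ⟨t, htB⟩ - w₂ ⟨t, htB⟩| := by
        rw [extI_eq hB w₁ htB, extI_eq hB w₂ htB]
        have := hFL.dist_le_mul (w₁ ⟨t, htB⟩) (w₂ ⟨t, htB⟩)
        simpa [Real.dist_eq] using this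
      have hIH := IH u v ⟨t, htB⟩
      rw [← hw₁, ← hw₂] at hIH
      have hIH' : |w₁ ⟨t, htB⟩ - w₂ ⟨t, htB⟩| ≤ c * t ^ (2*j) := by
        calc |w₁ ⟨t, htB⟩ - w₂ ⟨t, htB⟩|
            ≤ dist u v * ((L:ℝ) ^ j * t ^ (2*j) / (2 ^ j * (j.factorial))) := hIH
          _ = c * t ^ (2*j) := by rw [hc]; ring
      calc ((x:ℝ) - t) * |F (extI hB w₁ t) - F (extI hB w₂ t)|
          ≤ ((x:ℝ) - t) * ((L:ℝ) * (c * t ^ (2*j))) := by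
            apply mul_le_mul_of_nonneg_left _ (by linarith)
            calc |F (extI hB w₁ t) - F (extI hB w₂ t)|
                ≤ (L:ℝ) * |w₁ ⟨t, htB⟩ - w₂ ⟨t, htB⟩| := hlip
              _ ≤ (L:ℝ) * (c * t ^ (2*j)) :=
                  mul_le_mul_of_nonneg_left hIH' L.2
        _ = ((L:ℝ) * c) * (((x:ℝ) - t) * t ^ (2*j)) := by ring
    have hpull : (∫ t in (0:ℝ)..(x:ℝ), ((L:ℝ) * c) * (((x:ℝ) - t) * t ^ (2*j)))
        = ((L:ℝ) * c) * ∫ t in (0:ℝ)..(x:ℝ), (((x:ℝ) - t) * t ^ (2*j)) :=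
      intervalIntegral.integral_const_mul _ _
    have hw := integral_weight_pow hx0 (2*j)
    have hd2 : (0:ℝ) ≤ dist u v * ((L:ℝ) ^ (j+1) * (x:ℝ) ^ (2*j+2)) := by positivity
    calc |∫ t in (0:ℝ)..(x:ℝ), ((x:ℝ) - t) * (F (extI hB w₁ t) - F (extI hB w₂ t))|
        ≤ ((L:ℝ) * c) * ∫ t in (0:ℝ)..(x:ℝ), (((x:ℝ) - t) * t ^ (2*j)) := by
          rw [← hpull]; exact le_trans habs hmono
      _ ≤ ((L:ℝ) * c) * ((x:ℝ) ^ (2*j + 2) / (2 * ((2*j : ℕ) + 1))) := by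
          apply mul_le_mul_of_nonneg_left hw (by positivity)
      _ = (dist u v * ((L:ℝ) ^ (j+1) * (x:ℝ) ^ (2*j+2)))
            / ((2 ^ j * (j.factorial : ℝ)) * (2 * ((2*j : ℕ) + 1))) := by
          rw [hc]; push_cast
          have f1 : ((j.factorial : ℝ)) ≠ 0 := by positivity
          have f2 : ((2:ℝ)^j) ≠ 0 := by positivity
          have f3 : (2 * (2*(j:ℝ) + 1)) ≠ 0 := by positivity
          field_simp
          ring
      _ ≤ (dist u v * ((L:ℝ) ^ (j+1) * (x:ℝ) ^ (2*j+2)))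
            / (2 ^ (j+1) * (((j:ℝ)+1) * (j.factorial : ℝ))) := by
          apply div_le_div_of_nonneg_left hd2 (by positivity)
          push_cast
          have hfact : (0:ℝ) < (j.factorial : ℝ) := by positivity
          have hp : (0:ℝ) < (2:ℝ) ^ j := by positivity
          have hj0 : (0:ℝ) ≤ (j:ℝ) := Nat.cast_nonneg j
          rw [pow_succ]
          nlinarith [mul_nonneg (mul_nonneg hp.le hfact.le) hj0]
      _ = dist u v * ((L:ℝ) ^ (j+1) * (x:ℝ) ^ (2*(j+1)) / (2 ^ (j+1) * ((j+1).factorial))) := by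
          rw [Nat.factorial_succ, show 2*(j+1) = 2*j+2 from by ring]
          push_cast; ring


lemma dist_iter_le (hB : 0 < B) (Tb s : ℝ) {F gh : ℝ → ℝ}
    (hF : Continuous F) (hgh : Continuous gh) (L : ℝ≥0) (hFL : LipschitzWith L F)
    (j : ℕ) (u v : C(Icc (0:ℝ) B, ℝ)) :
    dist ((Phi hB Tb s hF hgh)^[j] u) ((Phi hB Tb s hF hgh)^[j] v)
      ≤ ((L:ℝ) * B ^ 2 / 2) ^ j / j.factorial * dist u v := by
  have hb0 : 0 ≤ ((L:ℝ) * B ^ 2 / 2) ^ j / j.factorial * dist u v := by positivity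
  rw [ContinuousMap.dist_le hb0]
  intro x
  rw [Real.dist_eq]
  have hx0 : (0:ℝ) ≤ (x:ℝ) := x.2.1
  have hxB : (x:ℝ) ≤ B := x.2.2
  calc |((Phi hB Tb s hF hgh)^[j] u) x - ((Phi hB Tb s hF hgh)^[j] v) x|
      ≤ dist u v * ((L:ℝ) ^ j * (x:ℝ) ^ (2*j) / (2 ^ j * (j.factorial))) :=
        iter_bound hB Tb s hF hgh L hFL j u v x
    _ ≤ dist u v * ((L:ℝ) ^ j * B ^ (2*j) / (2 ^ j * (j.factorial))) := by
        gcongr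
    _ = ((L:ℝ) * B ^ 2 / 2) ^ j / j.factorial * dist u v := by
        rw [div_pow, mul_pow, ← pow_mul]
        ring

lemma lipschitzWith_iter (hB : 0 < B) (Tb s : ℝ) {F gh : ℝ → ℝ}
    (hF : Continuous F) (hgh : Continuous gh) (L : ℝ≥0) (hFL : LipschitzWith L F) (j : ℕ) :
    LipschitzWith (Real.toNNReal (((L:ℝ) * B ^ 2 / 2) ^ j / j.factorial))
      ((Phi hB Tb s hF hgh)^[j]) := by
  apply LipschitzWith.of_dist_le_mul
  intro u v
  rw [Real.coe_toNNReal _ (by positivity)]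
  exact dist_iter_le hB Tb s hF hgh L hFL j u v

lemma dist_Phi_param (hB : 0 < B) (Tb : ℝ) {F gh : ℝ → ℝ}
    (hF : Continuous F) (hgh : Continuous gh) (s σ : ℝ) (w : C(Icc (0:ℝ) B, ℝ)) :
    dist (Phi hB Tb s hF hgh w) (Phi hB Tb σ hF hgh w) ≤ B * |s - σ| := by
  rw [ContinuousMap.dist_le (by positivity)]
  intro x
  rw [Real.dist_eq, Phi_apply, Phi_apply]
  rw [show (Tb + s * (x:ℝ) + ∫ t in (0:ℝ)..(x:ℝ), ((x:ℝ) - t) * (F (extI hB w t) - gh t))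
      - (Tb + σ * (x:ℝ) + ∫ t in (0:ℝ)..(x:ℝ), ((x:ℝ) - t) * (F (extI hB w t) - gh t))
      = (s - σ) * (x:ℝ) from by ring, abs_mul]
  have hx0 : (0:ℝ) ≤ (x:ℝ) := x.2.1
  have hxB : (x:ℝ) ≤ B := x.2.2
  rw [abs_of_nonneg hx0, mul_comm]
  exact mul_le_mul_of_nonneg_right hxB (abs_nonneg _)

lemma dist_iter_param (hB : 0 < B) (Tb : ℝ) {F gh : ℝ → ℝ}
    (hF : Continuous F) (hgh : Continuous gh) (L : ℝ≥0) (hFL : LipschitzWith L F) (j : ℕ) :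
    ∃ D : ℝ, 0 ≤ D ∧ ∀ (s σ : ℝ) (w : C(Icc (0:ℝ) B, ℝ)),
      dist ((Phi hB Tb s hF hgh)^[j] w) ((Phi hB Tb σ hF hgh)^[j] w) ≤ D * |s - σ| := by
  induction j with
  | zero => exact ⟨0, le_refl 0, fun s σ w => by simp⟩
  | succ j IH =>
    obtain ⟨D, hD0, hD⟩ := IH
    set μ : ℝ := ((L:ℝ) * B ^ 2 / 2) ^ j / j.factorial with hμ
    have hμ0 : 0 ≤ μ := by positivity
    refine ⟨μ * B + D, by positivity, fun s σ w => ?_⟩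
    rw [Function.iterate_succ_apply, Function.iterate_succ_apply]
    calc dist ((Phi hB Tb s hF hgh)^[j] (Phi hB Tb s hF hgh w))
          ((Phi hB Tb σ hF hgh)^[j] (Phi hB Tb σ hF hgh w))
        ≤ dist ((Phi hB Tb s hF hgh)^[j] (Phi hB Tb s hF hgh w))
            ((Phi hB Tb s hF hgh)^[j] (Phi hB Tb σ hF hgh w))
          + dist ((Phi hB Tb s hF hgh)^[j] (Phi hB Tb σ hF hgh w))
            ((Phi hB Tb σ hF hgh)^[j] (Phi hB Tb σ hF hgh w)) := dist_triangle _ _ _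
      _ ≤ μ * dist (Phi hB Tb s hF hgh w) (Phi hB Tb σ hF hgh w) + D * |s - σ| := by
          apply add_le_add _ (hD s σ _)
          have := dist_iter_le hB Tb s hF hgh L hFL j (Phi hB Tb s hF hgh w)
            (Phi hB Tb σ hF hgh w)
          rw [← hμ] at this
          exact this
      _ ≤ μ * (B * |s - σ|) + D * |s - σ| := by
          apply add_le_add_left
          exact mul_le_mul_of_nonneg_left (dist_Phi_param hB Tb hF hgh s σ w) hμ0
      _ = (μ * B + D) * |s - σ| := by ring

lemma lipschitz_case (hB : 0 < B) (Tb : ℝ) {F gh : ℝ → ℝ}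
    (hF : Continuous F) (hgh : Continuous gh) (L : ℝ≥0) (hFL : LipschitzWith L F)
    (K0 : ℝ) (hK0 : ∀ y t : ℝ, |F y - gh t| ≤ K0) :
    ∃ (s : ℝ) (u : C(Icc (0:ℝ) B, ℝ)), |s| ≤ K0 * B ∧
      (∀ x : Icc (0:ℝ) B, u x = Tb + s * (x:ℝ) +
        ∫ t in (0:ℝ)..(x:ℝ), ((x:ℝ) - t) * (F (extI hB u t) - gh t)) ∧
      s + (∫ t in (0:ℝ)..B, (F (extI hB u t) - gh t)) = 0 := by
  have hK00 : 0 ≤ K0 := le_trans (abs_nonneg _) (hK0 0 0)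
  -- choose k such that the k-th iterate is a contraction
  obtain ⟨k, hk⟩ : ∃ k, ((L:ℝ) * B ^ 2 / 2) ^ k / k.factorial < 1 := by
    have := FloorSemiring.tendsto_pow_div_factorial_atTop ((L:ℝ) * B ^ 2 / 2)
    have h2 := this.eventually (gt_mem_nhds (show (0:ℝ) < 1 by norm_num))
    obtain ⟨k, hk⟩ := h2.exists
    exact ⟨k, hk⟩
  set κ : ℝ≥0 := Real.toNNReal (((L:ℝ) * B ^ 2 / 2) ^ k / k.factorial) with hκdef
  have hκ1 : κ < 1 := by
    rw [hκdef, ← Real.toNNReal_one]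
    exact (Real.toNNReal_lt_toNNReal_iff (by norm_num)).2 hk
  have hcontr : ∀ s : ℝ, ContractingWith κ ((Phi hB Tb s hF hgh)^[k]) :=
    fun s => ⟨hκ1, lipschitzWith_iter hB Tb s hF hgh L hFL k⟩
  set usol : ℝ → C(Icc (0:ℝ) B, ℝ) :=
    fun s => ContractingWith.fixedPoint ((Phi hB Tb s hF hgh)^[k]) (hcontr s) with husol
  have hfix : ∀ s, Function.IsFixedPt (Phi hB Tb s hF hgh) (usol s) :=
    fun s => ContractingWith.isFixedPt_fixedPoint_iterate (hcontr s)
  have heq : ∀ s, ∀ x : Icc (0:ℝ) B, usol s x = Tb + s * (x:ℝ) +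
      ∫ t in (0:ℝ)..(x:ℝ), ((x:ℝ) - t) * (F (extI hB (usol s) t) - gh t) := by
    intro s x
    conv_lhs => rw [← hfix s]
    rfl
  -- distance between fixed points for different parameters
  obtain ⟨D, hD0, hD⟩ := dist_iter_param hB Tb hF hgh L hFL k
  have husol_dist : ∀ s σ : ℝ, dist (usol s) (usol σ) ≤ (D / (1 - κ)) * |s - σ| := by
    intro s σ
    have h1 : Function.IsFixedPt ((Phi hB Tb s hF hgh)^[k]) (usol s) :=
      ContractingWith.fixedPoint_isFixedPt (hcontr s)
    have h2 : Function.IsFixedPt ((Phi hB Tb σ hF hgh)^[k]) (usol σ) :=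
      ContractingWith.fixedPoint_isFixedPt (hcontr σ)
    have := ContractingWith.dist_fixedPoint_fixedPoint_of_dist_le' (hcontr s)
      ((Phi hB Tb σ hF hgh)^[k]) h1 h2 (fun z => hD s σ z)
    calc dist (usol s) (usol σ) ≤ D * |s - σ| / (1 - κ) := this
      _ = (D / (1 - κ)) * |s - σ| := by ring
  -- the shooting function
  set H : ℝ → ℝ := fun s => s + ∫ t in (0:ℝ)..B, (F (extI hB (usol s) t) - gh t) with hH
  have hHcont : Continuous H := by
    have hone : (0:ℝ) < 1 - κ := by
      have := hκ1
      rw [← NNReal.coe_lt_coe] at this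
      simpa using this
    have hlipH : LipschitzWith (Real.toNNReal (1 + (L:ℝ) * B * (D / (1 - κ)))) H := by
      apply LipschitzWith.of_dist_le_mul
      intro s σ
      rw [Real.coe_toNNReal _ (by positivity), Real.dist_eq, Real.dist_eq, hH]
      have hint : |(∫ t in (0:ℝ)..B, (F (extI hB (usol s) t) - gh t))
          - ∫ t in (0:ℝ)..B, (F (extI hB (usol σ) t) - gh t)|
          ≤ (L:ℝ) * B * (D / (1 - κ)) * |s - σ| := by
        rw [← intervalIntegral.integral_sub
          ((show Continuous fun t => F (extI hB (usol s) t) - gh t from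
            (hF.comp (continuous_extI hB _)).sub hgh).intervalIntegrable _ _)
          ((show Continuous fun t => F (extI hB (usol σ) t) - gh t from
            (hF.comp (continuous_extI hB _)).sub hgh).intervalIntegrable _ _)]
        have hb := intervalIntegral.norm_integral_le_of_norm_le_const
          (a := 0) (b := B) (C := (L:ℝ) * (dist (usol s) (usol σ)))
          (f := fun t => (F (extI hB (usol s) t) - gh t) - (F (extI hB (usol σ) t) - gh t)) ?_
        · rw [Real.norm_eq_abs, sub_zero, abs_of_nonneg hB.le] at hb
          calc |∫ t in (0:ℝ)..B, ((F (extI hB (usol s) t) - gh t)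
                - (F (extI hB (usol σ) t) - gh t))|
              ≤ (L:ℝ) * (dist (usol s) (usol σ)) * B := hb
            _ ≤ (L:ℝ) * ((D / (1 - κ)) * |s - σ|) * B := by
                apply mul_le_mul_of_nonneg_right _ hB.le
                exact mul_le_mul_of_nonneg_left (husol_dist s σ) L.2
            _ = (L:ℝ) * B * (D / (1 - κ)) * |s - σ| := by ring
        · intro t _
          rw [show (F (extI hB (usol s) t) - gh t) - (F (extI hB (usol σ) t) - gh t)
            = F (extI hB (usol s) t) - F (extI hB (usol σ) t) from by ring, Real.norm_eq_abs]
          have h1 : |F (extI hB (usol s) t) - F (extI hB (usol σ) t)|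
              ≤ (L:ℝ) * |extI hB (usol s) t - extI hB (usol σ) t| := by
            have := hFL.dist_le_mul (extI hB (usol s) t) (extI hB (usol σ) t)
            simpa [Real.dist_eq] using this
          refine le_trans h1 (mul_le_mul_of_nonneg_left ?_ L.2)
          have := ContinuousMap.dist_apply_le_dist
            (f := usol s) (g := usol σ) (projIcc 0 B hB.le t)
          simpa [extI, Real.dist_eq] using this
      calc |H s - H σ| = |(s - σ) + ((∫ t in (0:ℝ)..B, (F (extI hB (usol s) t) - gh t))
            - ∫ t in (0:ℝ)..B, (F (extI hB (usol σ) t) - gh t))| := by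
            rw [hH]; ring_nf
        _ ≤ |s - σ| + |(∫ t in (0:ℝ)..B, (F (extI hB (usol s) t) - gh t))
            - ∫ t in (0:ℝ)..B, (F (extI hB (usol σ) t) - gh t)| := abs_add_le _ _
        _ ≤ |s - σ| + (L:ℝ) * B * (D / (1 - κ)) * |s - σ| := add_le_add_right hint _
        _ = (1 + (L:ℝ) * B * (D / (1 - κ))) * |s - σ| := by ring
    exact hlipH.continuous
  -- sign conditions and IVT
  have hintb : ∀ s, |∫ t in (0:ℝ)..B, (F (extI hB (usol s) t) - gh t)| ≤ K0 * B := by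
    intro s
    have hb := intervalIntegral.norm_integral_le_of_norm_le_const
      (a := 0) (b := B) (C := K0)
      (f := fun t => F (extI hB (usol s) t) - gh t)
      (fun t _ => by rw [Real.norm_eq_abs]; exact hK0 _ _)
    rw [Real.norm_eq_abs, sub_zero, abs_of_nonneg hB.le] at hb
    exact hb
  have hneg : H (-(K0 * B)) ≤ 0 := by
    have := (abs_le.1 (hintb (-(K0 * B)))).2
    rw [hH]; dsimp only; linarith
  have hpos : 0 ≤ H (K0 * B) := by
    have := (abs_le.1 (hintb (K0 * B))).1
    rw [hH]; dsimp only; linarith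
  have hsub : (0:ℝ) ∈ Icc (H (-(K0 * B))) (H (K0 * B)) := ⟨hneg, hpos⟩
  have hmem := intermediate_value_Icc (by nlinarith : -(K0 * B) ≤ K0 * B)
    hHcont.continuousOn hsub
  obtain ⟨s, hs, hHs⟩ := hmem
  refine ⟨s, usol s, abs_le.2 ⟨by linarith [hs.1], hs.2⟩, heq s, hHs⟩

section Moreau

variable {φ : ℝ → ℝ} {C : ℝ}

noncomputable def moreau (φ : ℝ → ℝ) (n : ℕ) : ℝ → ℝ :=
  fun t => ⨅ s : ℝ, (φ s + ((n:ℝ)+1) * |t - s|)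

lemma moreau_bddBelow (hC : ∀ t, |φ t| ≤ C) (n : ℕ) (t : ℝ) :
    BddBelow (Set.range fun s => φ s + ((n:ℝ)+1) * |t - s|) := by
  refine ⟨-C, ?_⟩
  rintro _ ⟨s, rfl⟩
  have h1 := (abs_le.1 (hC s)).1
  have h2 : (0:ℝ) ≤ ((n:ℝ)+1) * |t - s| := by positivity
  dsimp only
  linarith

lemma moreau_le (hC : ∀ t, |φ t| ≤ C) (n : ℕ) (t : ℝ) : moreau φ n t ≤ φ t := by
  have := ciInf_le (moreau_bddBelow hC n t) t
  simpa [moreau] using this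

lemma moreau_abs_le (hC : ∀ t, |φ t| ≤ C) (n : ℕ) (t : ℝ) : |moreau φ n t| ≤ C := by
  rw [abs_le]
  constructor
  · apply le_ciInf
    intro s
    have h1 := (abs_le.1 (hC s)).1
    have h2 : (0:ℝ) ≤ ((n:ℝ)+1) * |t - s| := by positivity
    linarith
  · exact le_trans (moreau_le hC n t) (abs_le.1 (hC t)).2

lemma moreau_lipschitz (hC : ∀ t, |φ t| ≤ C) (n : ℕ) :
    LipschitzWith ((n:ℝ≥0)+1) (moreau φ n) := by
  apply LipschitzWith.of_dist_le_mul
  intro t t'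
  rw [Real.dist_eq, Real.dist_eq]
  have hcoe : (((n:ℝ≥0)+1 : ℝ≥0) : ℝ) = (n:ℝ)+1 := by push_cast; ring
  rw [hcoe, abs_sub_le_iff]
  have key : ∀ a b : ℝ, moreau φ n a - moreau φ n b ≤ ((n:ℝ)+1) * |a - b| := by
    intro a b
    have hb : ∀ s, moreau φ n a - ((n:ℝ)+1) * |a - b| ≤ φ s + ((n:ℝ)+1) * |b - s| := by
      intro s
      have h1 : moreau φ n a ≤ φ s + ((n:ℝ)+1) * |a - s| := ciInf_le (moreau_bddBelow hC n a) s
      have h2 : |a - s| ≤ |a - b| + |b - s| := abs_sub_le a b s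
      have h3 : ((n:ℝ)+1) * |a - s| ≤ ((n:ℝ)+1) * (|a - b| + |b - s|) :=
        mul_le_mul_of_nonneg_left h2 (by positivity)
      nlinarith
    have h5 : moreau φ n a - ((n:ℝ)+1) * |a - b| ≤ moreau φ n b := le_ciInf hb
    linarith
  refine ⟨key t t', ?_⟩
  rw [abs_sub_comm t t']
  exact key t' t

lemma moreau_ge (hφc : Continuous φ) (hC : ∀ t, |φ t| ≤ C) {ε M : ℝ} (hε : 0 < ε) :
    ∃ N : ℕ, ∀ n ≥ N, ∀ y : ℝ, |y| ≤ M → φ y - ε ≤ moreau φ n y := by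
  have hucont : UniformContinuousOn φ (Icc (-(M+1)) (M+1)) :=
    isCompact_Icc.uniformContinuousOn_of_continuous hφc.continuousOn
  rw [Metric.uniformContinuousOn_iff_le] at hucont
  obtain ⟨δ, hδ0, hδ⟩ := hucont ε hε
  set δ' : ℝ := min δ 1 with hδ'def
  have hδ'0 : 0 < δ' := lt_min hδ0 one_pos
  obtain ⟨N, hN⟩ := exists_nat_ge ((2*C)/δ')
  refine ⟨N, fun n hn y hy => ?_⟩
  have hC0 : 0 ≤ C := le_trans (abs_nonneg _) (hC 0)
  apply le_ciInf
  intro s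
  by_cases hcase : |y - s| ≤ δ'
  · have hsmem : s ∈ Icc (-(M+1)) (M+1) := by
      have h1 : |s| ≤ M + 1 := by
        have := abs_sub_abs_le_abs_sub s y
        have h2 : |s - y| = |y - s| := abs_sub_comm s y
        have h3 : δ' ≤ 1 := min_le_right _ _
        linarith
      exact abs_le.1 h1
    have hymem : y ∈ Icc (-(M+1)) (M+1) := by
      apply abs_le.1; have hM0 : 0 ≤ M := le_trans (abs_nonneg y) hy; linarith [hy]
    have := hδ y hymem s hsmem (by rw [Real.dist_eq]; exact le_trans hcase (min_le_left _ _))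
    rw [Real.dist_eq, abs_le] at this
    have h2 : (0:ℝ) ≤ ((n:ℝ)+1) * |y - s| := by positivity
    linarith [this.1]
  · push_neg at hcase
    have h1 : -C ≤ φ s := (abs_le.1 (hC s)).1
    have h2 : φ y ≤ C := (abs_le.1 (hC y)).2
    have hNn : ((N:ℝ)) ≤ (n:ℝ) := Nat.cast_le.2 hn
    have h3 : ((n:ℝ)+1) * |y - s| ≥ ((N:ℝ)+1) * δ' := by
      apply mul_le_mul (by linarith) hcase.le hδ'0.le (by positivity)
    have h4 : 2*C ≤ ((N:ℝ)+1) * δ' := by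
      rw [div_le_iff₀ hδ'0] at hN
      nlinarith [hδ'0]
    linarith
end Moreau

lemma isCompact_lipschitz_ball (hB : 0 < B) (Λ : ℝ≥0) (M : ℝ) :
    IsCompact {u : C(Icc (0:ℝ) B, ℝ) | LipschitzWith Λ ⇑u ∧ ∀ x, u x ∈ Icc (-M) M} := by
  set S := {u : C(Icc (0:ℝ) B, ℝ) | LipschitzWith Λ ⇑u ∧ ∀ x, u x ∈ Icc (-M) M} with hS
  apply ArzelaAscoli.isCompact_of_equicontinuous
  · have himage : ContinuousMap.toFun '' S
        = {f : Icc (0:ℝ) B → ℝ | LipschitzWith Λ f ∧ ∀ x, f x ∈ Icc (-M) M} := by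
      ext f
      constructor
      · rintro ⟨u, hu, rfl⟩; exact hu
      · intro hf; exact ⟨⟨f, hf.1.continuous⟩, hf, rfl⟩
    rw [himage]
    have h1 : IsClosed {f : Icc (0:ℝ) B → ℝ | LipschitzWith Λ f} := by
      have hiff : {f : Icc (0:ℝ) B → ℝ | LipschitzWith Λ f}
          = ⋂ (x : Icc (0:ℝ) B), ⋂ (y : Icc (0:ℝ) B),
            {f | dist (f x) (f y) ≤ (Λ:ℝ) * dist x y} := by
        ext f
        simp only [mem_setOf_eq, mem_iInter, lipschitzWith_iff_dist_le_mul]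
      rw [hiff]
      exact isClosed_iInter fun x => isClosed_iInter fun y =>
        isClosed_le ((continuous_apply x).dist (continuous_apply y)) continuous_const
    have h2 : IsClosed {f : Icc (0:ℝ) B → ℝ | ∀ x, f x ∈ Icc (-M) M} := by
      have hiff : {f : Icc (0:ℝ) B → ℝ | ∀ x, f x ∈ Icc (-M) M}
          = ⋂ (x : Icc (0:ℝ) B), (fun f : Icc (0:ℝ) B → ℝ => f x) ⁻¹' (Icc (-M) M) := by
        ext f; simp [mem_iInter]
      rw [hiff]
      exact isClosed_iInter fun x => isClosed_Icc.preimage (continuous_apply x)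
    apply IsCompact.of_isClosed_subset
      (isCompact_univ_pi fun _ : Icc (0:ℝ) B => (isCompact_Icc : IsCompact (Icc (-M) M)))
    · exact h1.inter h2
    · intro f hf
      rw [mem_univ_pi]
      exact fun x => hf.2 x
  · apply Metric.equicontinuous_of_continuity_modulus (fun d => (Λ:ℝ) * d)
    · have : Continuous fun d : ℝ => (Λ:ℝ) * d := continuous_const.mul continuous_id
      have h0 : ((Λ:ℝ) * (0:ℝ)) = 0 := by ring
      simpa [h0] using this.tendsto 0
    · intro x y i
      exact i.2.1.dist_le_mul x y

lemma bound_above (hB : 0 < B) {T Td h : ℝ → ℝ} {γ : ℝ}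
    (hT : ∀ x, HasDerivAt T (Td x) x) (hTd : ∀ x, HasDerivAt Td (h x) x)
    (hT0 : T 0 ≤ γ) (hTB : Td B = 0)
    (hsign : ∀ x ∈ Icc (0:ℝ) B, γ < T x → 0 < h x) :
    ∀ x ∈ Icc (0:ℝ) B, T x ≤ γ := by
  by_contra hcon
  push_neg at hcon
  obtain ⟨z, hz, hzγ⟩ := hcon
  have hcontT : Continuous T := continuous_iff_continuousAt.2 fun x => (hT x).continuousAt
  have hcontTd : Continuous Td := continuous_iff_continuousAt.2 fun x => (hTd x).continuousAt
  obtain ⟨w, hw, hwmax⟩ := isCompact_Icc.exists_isMaxOn (nonempty_Icc.2 hB.le)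
    hcontT.continuousOn
  have hwγ : γ < T w := lt_of_lt_of_le hzγ (hwmax hz)
  have hw0 : 0 < w := by
    rcases lt_or_eq_of_le hw.1 with h | h
    · exact h
    · exfalso; rw [← h] at hwγ; linarith
  have hUopen : IsOpen {x : ℝ | γ < T x} := isOpen_lt continuous_const hcontT
  obtain ⟨r, hr0, hrball⟩ := Metric.isOpen_iff.1 hUopen w hwγ
  -- a helper to derive contradiction from strict monotonicity of Td on [a,b] ⊆ Icc 0 B ∩ U
  rcases lt_or_eq_of_le hw.2 with hwB | hwB
  · -- w < B, interior maximum
    set δ : ℝ := min (r/2) (B - w) with hδdef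
    have hδ0 : 0 < δ := lt_min (by linarith) (by linarith)
    have hsub : Icc w (w + δ) ⊆ Icc (0:ℝ) B := by
      intro y hy
      constructor
      · linarith [hy.1, hw.1]
      · have := hy.2
        have : y ≤ w + (B - w) := le_trans this (by have := min_le_right (r/2) (B-w); linarith)
        linarith
    have hball : Icc w (w + δ) ⊆ {x : ℝ | γ < T x} := by
      intro y hy
      apply hrball
      rw [Metric.mem_ball, Real.dist_eq, abs_of_nonneg (by linarith [hy.1])]
      have := hy.2
      have hδr : δ ≤ r/2 := min_le_left _ _
      linarith
    have hmono : StrictMonoOn Td (Icc w (w + δ)) := by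
      apply strictMonoOn_of_deriv_pos (convex_Icc _ _) hcontTd.continuousOn
      intro y hy
      rw [interior_Icc] at hy
      rw [(hTd y).deriv]
      exact hsign y (hsub ⟨hy.1.le, hy.2.le⟩) (hball ⟨hy.1.le, hy.2.le⟩)
    have hTd0 : Td w = 0 := by
      have hnhds : Icc (0:ℝ) B ∈ nhds w := Icc_mem_nhds hw0 hwB
      exact (hwmax.isLocalMax hnhds).hasDerivAt_eq_zero (hT w)
    have hmonoT : StrictMonoOn T (Icc w (w + δ)) := by
      apply strictMonoOn_of_deriv_pos (convex_Icc _ _) hcontT.continuousOn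
      intro y hy
      rw [interior_Icc] at hy
      rw [(hT y).deriv]
      have := hmono (left_mem_Icc.2 (by linarith)) ⟨hy.1.le, hy.2.le⟩ hy.1
      rw [hTd0] at this
      exact this
    have hlt : T w < T (w + δ) := hmonoT (left_mem_Icc.2 (by linarith))
      (right_mem_Icc.2 (by linarith)) (by linarith)
    have := hwmax (hsub (right_mem_Icc.2 (by linarith)))
    simp only [mem_setOf_eq] at this
    linarith [this]
  · -- w = B
    set δ : ℝ := min (r/2) w with hδdef
    have hδ0 : 0 < δ := lt_min (by linarith) hw0
    have hsub : Icc (w - δ) w ⊆ Icc (0:ℝ) B := by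
      intro y hy
      have hδw : δ ≤ w := min_le_right _ _
      exact ⟨by linarith [hy.1], le_trans hy.2 hw.2⟩
    have hball : Icc (w - δ) w ⊆ {x : ℝ | γ < T x} := by
      intro y hy
      apply hrball
      rw [Metric.mem_ball, Real.dist_eq, abs_of_nonpos (by linarith [hy.2])]
      have := hy.1
      have hδr : δ ≤ r/2 := min_le_left _ _
      linarith
    have hmono : StrictMonoOn Td (Icc (w - δ) w) := by
      apply strictMonoOn_of_deriv_pos (convex_Icc _ _) hcontTd.continuousOn
      intro y hy
      rw [interior_Icc] at hy
      rw [(hTd y).deriv]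
      exact hsign y (hsub ⟨hy.1.le, hy.2.le⟩) (hball ⟨hy.1.le, hy.2.le⟩)
    have hTdB : Td w = 0 := by rw [hwB]; exact hTB
    have hantiT : StrictAntiOn T (Icc (w - δ) w) := by
      apply strictAntiOn_of_deriv_neg (convex_Icc _ _) hcontT.continuousOn
      intro y hy
      rw [interior_Icc] at hy
      rw [(hT y).deriv]
      have := hmono ⟨hy.1.le, hy.2.le⟩ (right_mem_Icc.2 (by linarith)) hy.2
      rw [hTdB] at this
      linarith
    have hlt : T w < T (w - δ) := hantiT (left_mem_Icc.2 (by linarith))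
      (right_mem_Icc.2 (by linarith)) (by linarith)
    have := hwmax (hsub (left_mem_Icc.2 (by linarith)))
    simp only [mem_setOf_eq] at this
    linarith [this]

end BVP9

open BVP9

/-- Existence for the second order boundary value problem
−T'' + φ(T) = g on [0,B] with T(0) = T_b, T'(B) = 0, and 0 ≤ T ≤ γ. -/
theorem stmt_9 (B γ Tb : ℝ) (hB : 0 < B) (hγ : 0 < γ) (hTb : Tb ∈ Set.Icc 0 γ)
    (φ : ℝ → ℝ) (hφc : Continuous φ) (hφmono : StrictMono φ)
    (hφbdd : ∃ C : ℝ, ∀ t : ℝ, |φ t| ≤ C) (hφ0 : φ 0 ≤ 0)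
    (g : ℝ → ℝ) (hgc : ContinuousOn g (Set.Icc 0 B))
    (hg : ∀ x ∈ Set.Icc (0:ℝ) B, g x ∈ Set.Icc 0 (φ γ)) :
    ∃ T T' T'' : ℝ → ℝ,
      (∀ x ∈ Set.Icc (0:ℝ) B, HasDerivWithinAt T (T' x) (Set.Icc 0 B) x) ∧
      (∀ x ∈ Set.Icc (0:ℝ) B, HasDerivWithinAt T' (T'' x) (Set.Icc 0 B) x) ∧
      ContinuousOn T'' (Set.Icc 0 B) ∧
      (∀ x ∈ Set.Icc (0:ℝ) B, -T'' x + φ (T x) = g x) ∧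
      T 0 = Tb ∧ T' B = 0 ∧
      (∀ x ∈ Set.Icc (0:ℝ) B, T x ∈ Set.Icc 0 γ) := by
  classical
  obtain ⟨C, hC⟩ := hφbdd
  have hC0 : 0 ≤ C := le_trans (abs_nonneg _) (hC 0)
  have hg0 := hg 0 ⟨le_refl 0, hB.le⟩
  have hφγ0 : 0 ≤ φ γ := le_trans hg0.1 hg0.2
  have habs_sub : ∀ a b : ℝ, |a - b| ≤ |a| + |b| := fun a b => by
    rw [sub_eq_add_neg]
    exact (abs_add_le _ _).trans (le_of_eq (by rw [abs_neg]))
  -- extended g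
  set gh : ℝ → ℝ := fun t => g ((projIcc 0 B hB.le t) : ℝ) with hgh_def
  have hghc : Continuous gh := by
    have : gh = (Set.Icc (0:ℝ) B).restrict g ∘ projIcc 0 B hB.le := rfl
    rw [this]
    exact hgc.restrict.comp continuous_projIcc
  have hgh_mem : ∀ t, gh t ∈ Set.Icc 0 (φ γ) := fun t => hg _ (projIcc 0 B hB.le t).2
  have hgh_abs : ∀ t, |gh t| ≤ φ γ := fun t =>
    abs_le.2 ⟨by linarith [(hgh_mem t).1], (hgh_mem t).2⟩
  have hgh_eq : ∀ x ∈ Set.Icc (0:ℝ) B, gh x = g x := by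
    intro x hx
    rw [hgh_def]
    simp [projIcc_of_mem hB.le hx]
  set K0 : ℝ := C + φ γ with hK0def
  have hK00 : 0 ≤ K0 := by positivity
  have hK0 : ∀ (n : ℕ) (y t : ℝ), |moreau φ n y - gh t| ≤ K0 := fun n y t =>
    (habs_sub _ _).trans (add_le_add (moreau_abs_le hC n y) (hgh_abs t))
  -- solutions of the Lipschitz-regularised problems
  have hex : ∀ n : ℕ, ∃ s : ℝ, ∃ u : C(Set.Icc (0:ℝ) B, ℝ), |s| ≤ K0 * B ∧
      (∀ x : Set.Icc (0:ℝ) B, u x = Tb + s * (x:ℝ) +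
        ∫ t in (0:ℝ)..(x:ℝ), ((x:ℝ) - t) * (moreau φ n (extI hB u t) - gh t)) ∧
      s + (∫ t in (0:ℝ)..B, (moreau φ n (extI hB u t) - gh t)) = 0 :=
    fun n => lipschitz_case hB Tb (moreau_lipschitz hC n).continuous hghc
      ((n:ℝ≥0)+1) (moreau_lipschitz hC n) K0 (hK0 n)
  choose sseq useq hsabs hequ hNeu using hex
  -- uniform bounds
  set M' : ℝ := |Tb| + K0 * B * B + K0 * B ^ 2 with hM'def
  have hHnabs : ∀ n t, |moreau φ n (extI hB (useq n) t) - gh t| ≤ K0 := fun n t => hK0 n _ t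
  have hHnc : ∀ n, Continuous fun t => moreau φ n (extI hB (useq n) t) - gh t := fun n =>
    (((moreau_lipschitz hC n).continuous).comp (continuous_extI hB (useq n))).sub hghc
  have hub : ∀ n (x : Set.Icc (0:ℝ) B), |useq n x| ≤ M' := by
    intro n x
    rw [hequ n x]
    have h1 : |Tb + sseq n * (x:ℝ)| ≤ |Tb| + K0 * B * B := by
      refine (abs_add_le _ _).trans (add_le_add_right ?_ _)
      rw [abs_mul]
      have hx0 : (0:ℝ) ≤ (x:ℝ) := x.2.1
      have hxB : (x:ℝ) ≤ B := x.2.2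
      rw [abs_of_nonneg hx0]
      exact mul_le_mul (hsabs n) hxB hx0 (by positivity)
    have h2 : |∫ t in (0:ℝ)..(x:ℝ), ((x:ℝ) - t) * (moreau φ n (extI hB (useq n) t) - gh t)|
        ≤ K0 * B ^ 2 := abs_P_le (hHnabs n) x.2.1 x.2.2
    calc |Tb + sseq n * (x:ℝ) + ∫ t in (0:ℝ)..(x:ℝ),
          ((x:ℝ) - t) * (moreau φ n (extI hB (useq n) t) - gh t)|
        ≤ |Tb + sseq n * (x:ℝ)| + |∫ t in (0:ℝ)..(x:ℝ),
            ((x:ℝ) - t) * (moreau φ n (extI hB (useq n) t) - gh t)| := abs_add_le _ _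
      _ ≤ (|Tb| + K0 * B * B) + K0 * B ^ 2 := add_le_add h1 h2
      _ = M' := by rw [hM'def]
  -- uniform Lipschitz bound
  set Λr : ℝ := K0 * B + K0 * B with hΛrdef
  have hΛr0 : 0 ≤ Λr := by positivity
  have hulip : ∀ n, LipschitzWith (Real.toNNReal Λr) ⇑(useq n) := by
    intro n
    apply LipschitzWith.of_dist_le_mul
    intro x y
    rw [Real.coe_toNNReal _ hΛr0, Real.dist_eq, hequ n x, hequ n y]
    set hn : ℝ → ℝ := fun t => moreau φ n (extI hB (useq n) t) - gh t with hhn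
    have hder : ∀ z ∈ Set.Icc (0:ℝ) B,
        HasDerivWithinAt (fun z => Tb + sseq n * z + ∫ t in (0:ℝ)..z, (z - t) * hn t)
          (sseq n + ∫ t in (0:ℝ)..z, hn t) (Set.Icc (0:ℝ) B) z := by
      intro z _
      have h1 : HasDerivAt (fun z => Tb + sseq n * z) (sseq n) z := by
        simpa using ((hasDerivAt_id z).const_mul (sseq n)).const_add Tb
      exact (h1.add (hasDerivAt_P (hHnc n) z)).hasDerivWithinAt
    have hbound : ∀ z ∈ Set.Icc (0:ℝ) B, ‖sseq n + ∫ t in (0:ℝ)..z, hn t‖ ≤ Λr := by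
      intro z hz
      rw [Real.norm_eq_abs]
      have h1 : |∫ t in (0:ℝ)..z, hn t| ≤ K0 * z := abs_I_le (hHnabs n) hz.1
      have h2 : K0 * z ≤ K0 * B := mul_le_mul_of_nonneg_left hz.2 hK00
      have := abs_add_le (sseq n) (∫ t in (0:ℝ)..z, hn t)
      rw [hΛrdef]
      linarith [hsabs n]
    have := (convex_Icc (0:ℝ) B).norm_image_sub_le_of_norm_hasDerivWithin_le hder hbound y.2 x.2
    rw [Real.norm_eq_abs, Real.norm_eq_abs] at this
    calc |(Tb + sseq n * (x:ℝ) + ∫ t in (0:ℝ)..(x:ℝ), ((x:ℝ) - t) * hn t)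
          - (Tb + sseq n * (y:ℝ) + ∫ t in (0:ℝ)..(y:ℝ), ((y:ℝ) - t) * hn t)| ≤
        Λr * |(x:ℝ) - (y:ℝ)| := this
      _ = Λr * dist x y := by rw [Subtype.dist_eq, Real.dist_eq]
  -- extract a convergent subsequence
  have hmemS : ∀ n, useq n ∈ {u : C(Set.Icc (0:ℝ) B, ℝ) |
      LipschitzWith (Real.toNNReal Λr) ⇑u ∧ ∀ x, u x ∈ Set.Icc (-M') M'} :=
    fun n => ⟨hulip n, fun x => abs_le.1 (hub n x)⟩
  obtain ⟨u, huS, ψ, hψmono, hψtendsto⟩ :=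
    (isCompact_lipschitz_ball hB (Real.toNNReal Λr) M').tendsto_subseq hmemS
  obtain ⟨sinf, hsinfmem, ψ2, hψ2mono, hstendsto⟩ :=
    (isCompact_Icc (a := -(K0*B)) (b := K0*B)).tendsto_subseq
      (x := fun k => sseq (ψ k)) (fun k => abs_le.1 (hsabs (ψ k)))
  set ρ : ℕ → ℕ := ψ ∘ ψ2 with hρdef
  have hρmono : StrictMono ρ := hψmono.comp hψ2mono
  have hutendsto : Filter.Tendsto (fun k => useq (ρ k)) Filter.atTop (nhds u) :=
    hψtendsto.comp hψ2mono.tendsto_atTop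
  have hstendsto' : Filter.Tendsto (fun k => sseq (ρ k)) Filter.atTop (nhds sinf) := hstendsto
  -- the limit nonlinearity
  set hlim : ℝ → ℝ := fun t => φ (extI hB u t) - gh t with hhlim
  have hlimc : Continuous hlim := (hφc.comp (continuous_extI hB u)).sub hghc
  set Hn : ℕ → ℝ → ℝ := fun k t => moreau φ (ρ k) (extI hB (useq (ρ k)) t) - gh t with hHndef
  -- uniform convergence of Hn to hlim
  have hunif : ∀ ε : ℝ, 0 < ε → ∃ N : ℕ, ∀ k ≥ N, ∀ t : ℝ, |Hn k t - hlim t| ≤ ε := by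
    intro ε hε
    obtain ⟨N1, hN1⟩ := moreau_ge hφc hC (M := M') (half_pos hε)
    have hucont : UniformContinuousOn φ (Set.Icc (-(M'+1)) (M'+1)) :=
      isCompact_Icc.uniformContinuousOn_of_continuous hφc.continuousOn
    rw [Metric.uniformContinuousOn_iff_le] at hucont
    obtain ⟨δ, hδ0, hδ⟩ := hucont (ε/2) (half_pos hε)
    set δ' : ℝ := min δ 1 with hδ'def
    have hδ'0 : 0 < δ' := lt_min hδ0 one_pos
    obtain ⟨N2, hN2⟩ := (Metric.tendsto_atTop.1 hutendsto) δ' hδ'0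
    refine ⟨max N1 N2, fun k hk t => ?_⟩
    set a : ℝ := extI hB (useq (ρ k)) t with ha
    set b : ℝ := extI hB u t with hb
    have haM : |a| ≤ M' := hub (ρ k) _
    have hbM : |b| ≤ M' := abs_le.2 (huS.2 _)
    have hk1 : N1 ≤ ρ k := le_trans (le_trans (le_max_left _ _) hk) (hρmono.le_apply)
    have hm1 : |moreau φ (ρ k) a - φ a| ≤ ε/2 := by
      rw [abs_le]
      constructor
      · linarith [hN1 (ρ k) hk1 a haM]
      · linarith [moreau_le hC (ρ k) a, half_pos hε]
    have hab : |a - b| ≤ δ' := by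
      have h1 : dist (useq (ρ k) (projIcc 0 B hB.le t)) (u (projIcc 0 B hB.le t))
          ≤ dist (useq (ρ k)) u := ContinuousMap.dist_apply_le_dist _
      have h2 : dist (useq (ρ k)) u < δ' := hN2 k (le_trans (le_max_right _ _) hk)
      rw [Real.dist_eq] at h1
      exact le_of_lt (lt_of_le_of_lt h1 h2)
    have hm2 : |φ a - φ b| ≤ ε/2 := by
      have haI : a ∈ Set.Icc (-(M'+1)) (M'+1) := by
        apply abs_le.1; have := abs_le.1 haM; rw [abs_le]; constructor <;> linarith [this.1, this.2]
      have hbI : b ∈ Set.Icc (-(M'+1)) (M'+1) := by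
        apply abs_le.1; have := abs_le.1 hbM; rw [abs_le]; constructor <;> linarith [this.1, this.2]
      have := hδ a haI b hbI (by rw [Real.dist_eq]; exact le_trans hab (min_le_left _ _))
      rw [Real.dist_eq] at this
      exact this
    have : Hn k t - hlim t = (moreau φ (ρ k) a - φ a) + (φ a - φ b) := by
      rw [hHndef, hhlim]; ring
    rw [this]
    calc |(moreau φ (ρ k) a - φ a) + (φ a - φ b)|
        ≤ |moreau φ (ρ k) a - φ a| + |φ a - φ b| := abs_add_le _ _
      _ ≤ ε/2 + ε/2 := add_le_add hm1 hm2
      _ = ε := by ring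
  have hHnck : ∀ k, Continuous (Hn k) := fun k => hHnc (ρ k)
  -- limit of the integral equation
  have hinteq : ∀ x : Set.Icc (0:ℝ) B, u x = Tb + sinf * (x:ℝ) +
      ∫ t in (0:ℝ)..(x:ℝ), ((x:ℝ) - t) * hlim t := by
    intro x
    have hx0 : (0:ℝ) ≤ (x:ℝ) := x.2.1
    have hxB : (x:ℝ) ≤ B := x.2.2
    have h1 : Filter.Tendsto (fun k => useq (ρ k) x) Filter.atTop (nhds (u x)) := by
      rw [tendsto_iff_dist_tendsto_zero]
      apply squeeze_zero (fun k => dist_nonneg) (fun k => ContinuousMap.dist_apply_le_dist x)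
      exact tendsto_iff_dist_tendsto_zero.1 hutendsto
    have hint : Filter.Tendsto (fun k => ∫ t in (0:ℝ)..(x:ℝ), ((x:ℝ) - t) * Hn k t)
        Filter.atTop (nhds (∫ t in (0:ℝ)..(x:ℝ), ((x:ℝ) - t) * hlim t)) := by
      rw [Metric.tendsto_atTop]
      intro ε' hε'
      obtain ⟨N, hN⟩ := hunif (ε' / (B^2+1)) (by positivity)
      refine ⟨N, fun k hk => ?_⟩
      rw [Real.dist_eq, ← intervalIntegral.integral_sub
        (f := fun t => ((x:ℝ) - t) * Hn k t) (g := fun t => ((x:ℝ) - t) * hlim t)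
        (((continuous_const.sub continuous_id').mul (hHnck k)).intervalIntegrable _ _)
        (((continuous_const.sub continuous_id').mul hlimc).intervalIntegrable _ _)]
      have hb := intervalIntegral.norm_integral_le_of_norm_le_const
        (a := 0) (b := (x:ℝ)) (C := B * (ε' / (B^2+1)))
        (f := fun t => ((x:ℝ) - t) * Hn k t - ((x:ℝ) - t) * hlim t) ?_
      · rw [Real.norm_eq_abs, sub_zero, abs_of_nonneg hx0] at hb
        have hBB : B * (ε' / (B^2+1)) * (x:ℝ) ≤ B * (ε' / (B^2+1)) * B := by
          apply mul_le_mul_of_nonneg_left hxB (by positivity)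
        have hfinal : B * (ε' / (B^2+1)) * B < ε' := by
          rw [show B * (ε' / (B^2+1)) * B = ε' * (B^2 / (B^2+1)) from by ring]
          have : B^2 / (B^2+1) < 1 := by
            rw [div_lt_one (by positivity)]; linarith
          nlinarith
        linarith [hb]
      · intro t ht
        rw [uIoc_of_le hx0] at ht
        rw [show ((x:ℝ) - t) * Hn k t - ((x:ℝ) - t) * hlim t
          = ((x:ℝ) - t) * (Hn k t - hlim t) from by ring, Real.norm_eq_abs, abs_mul]
        have h1' : |(x:ℝ) - t| ≤ B := by
          rw [abs_of_nonneg (by linarith [ht.1, ht.2])]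
          linarith [ht.1]
        exact mul_le_mul h1' (hN k hk t) (abs_nonneg _) (by linarith [hx0, hxB])
    have h2 : Filter.Tendsto (fun k => Tb + sseq (ρ k) * (x:ℝ) +
        ∫ t in (0:ℝ)..(x:ℝ), ((x:ℝ) - t) * Hn k t) Filter.atTop
        (nhds (Tb + sinf * (x:ℝ) + ∫ t in (0:ℝ)..(x:ℝ), ((x:ℝ) - t) * hlim t)) :=
      ((tendsto_const_nhds.add (hstendsto'.mul_const ((x:ℝ)))).add hint)
    have hfun : (fun k => Tb + sseq (ρ k) * (x:ℝ) +
        ∫ t in (0:ℝ)..(x:ℝ), ((x:ℝ) - t) * Hn k t) = fun k => useq (ρ k) x :=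
      funext fun k => (hequ (ρ k) x).symm
    rw [hfun] at h2
    exact tendsto_nhds_unique h1 h2
  -- limit of the Neumann condition
  have hNeum : sinf + ∫ t in (0:ℝ)..B, hlim t = 0 := by
    have h2 : Filter.Tendsto (fun k => sseq (ρ k) + ∫ t in (0:ℝ)..B, Hn k t) Filter.atTop
        (nhds (sinf + ∫ t in (0:ℝ)..B, hlim t)) := by
      apply hstendsto'.add
      rw [Metric.tendsto_atTop]
      intro ε' hε'
      obtain ⟨N, hN⟩ := hunif (ε' / (B+1)) (by positivity)
      refine ⟨N, fun k hk => ?_⟩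
      rw [Real.dist_eq, ← intervalIntegral.integral_sub
        ((hHnck k).intervalIntegrable _ _) (hlimc.intervalIntegrable _ _)]
      have hb := intervalIntegral.norm_integral_le_of_norm_le_const
        (a := 0) (b := B) (C := ε' / (B+1))
        (f := fun t => Hn k t - hlim t)
        (fun t _ => by rw [Real.norm_eq_abs]; exact hN k hk t)
      rw [Real.norm_eq_abs, sub_zero, abs_of_nonneg hB.le] at hb
      have hfinal : ε' / (B+1) * B < ε' := by
        rw [show ε' / (B+1) * B = ε' * (B / (B+1)) from by ring]
        have : B / (B+1) < 1 := by rw [div_lt_one (by positivity)]; linarith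
        nlinarith
      linarith [hb]
    have hfun : (fun k => sseq (ρ k) + ∫ t in (0:ℝ)..B, Hn k t) = fun _ => (0:ℝ) :=
      funext fun k => hNeu (ρ k)
    rw [hfun] at h2
    exact (tendsto_nhds_unique tendsto_const_nhds h2).symm
  -- define the solution
  set T : ℝ → ℝ := fun x => Tb + sinf * x + ∫ t in (0:ℝ)..x, (x - t) * hlim t with hTdef
  set Td : ℝ → ℝ := fun x => sinf + ∫ t in (0:ℝ)..x, hlim t with hTddef
  have hT : ∀ x : ℝ, HasDerivAt T (Td x) x := by
    intro x
    have h1 : HasDerivAt (fun z => Tb + sinf * z) sinf x := by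
      simpa using ((hasDerivAt_id x).const_mul sinf).const_add Tb
    exact h1.add (hasDerivAt_P hlimc x)
  have hTd : ∀ x : ℝ, HasDerivAt Td (hlim x) x := by
    intro x
    have h1 : HasDerivAt (fun z => ∫ t in (0:ℝ)..z, hlim t) (hlim x) x :=
      intervalIntegral.integral_hasDerivAt_right (hlimc.intervalIntegrable _ _)
        hlimc.stronglyMeasurable.stronglyMeasurableAtFilter hlimc.continuousAt
    exact h1.const_add sinf
  have hTu : ∀ x (hx : x ∈ Set.Icc (0:ℝ) B), T x = u ⟨x, hx⟩ := by
    intro x hx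
    rw [hTdef]
    exact (hinteq ⟨x, hx⟩).symm
  have hT0 : T 0 = Tb := by rw [hTdef]; simp
  have hTdB : Td B = 0 := by rw [hTddef]; exact hNeum
  have hODE : ∀ x ∈ Set.Icc (0:ℝ) B, -hlim x + φ (T x) = g x := by
    intro x hx
    have h1 : extI hB u x = u ⟨x, hx⟩ := extI_eq hB u hx
    rw [hhlim]
    dsimp only
    rw [h1, ← hTu x hx, hgh_eq x hx]
    ring
  -- the maximum principle bounds
  have hupper : ∀ x ∈ Set.Icc (0:ℝ) B, T x ≤ γ := by
    apply bound_above hB hT hTd (by rw [hT0]; exact hTb.2) hTdB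
    intro x hx hγT
    have h1 : g x ≤ φ γ := (hg x hx).2
    have h2 : φ γ < φ (T x) := hφmono hγT
    have h3 := hODE x hx
    linarith
  have hlower : ∀ x ∈ Set.Icc (0:ℝ) B, 0 ≤ T x := by
    have := bound_above hB (T := fun x => -T x) (Td := fun x => -Td x) (h := fun x => -hlim x)
      (γ := 0) (fun x => (hT x).neg) (fun x => (hTd x).neg)
      (by rw [hT0]; linarith [hTb.1]) (by rw [hTdB]; ring)
      ?_
    · intro x hx
      have h4 := this x hx
      linarith
    · intro x hx hTneg
      have hTx : T x < 0 := by linarith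
      have h1 : 0 ≤ g x := (hg x hx).1
      have h2 : φ (T x) < φ 0 := hφmono hTx
      have h3 := hODE x hx
      have : hlim x = φ (T x) - g x := by linarith
      rw [this]
      linarith
  refine ⟨T, Td, hlim, fun x _ => (hT x).hasDerivWithinAt,
    fun x _ => (hTd x).hasDerivWithinAt, hlimc.continuousOn, hODE, hT0, hTdB,
    fun x hx => ⟨hlower x hx, hupper x hx⟩⟩
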